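/- Let m > 0, t_f > 0, I0 ∈ (0,1), and let x* ∈ (0, t_f) satisfy I(t_f − x*)·(m − x*) = 1. Then the emblematic disutility at the equilibrium has the closed form E(x*) = (1 + x* − m·I0) / (m·(1 − I0)). -/

import Mathlib

/-- Prevalence function `I(u) = I0 / (I0 + (1 - I0) exp(-u))`. -/
noncomputable def Ifun (I0 u : ℝ) : ℝ := I0 / (I0 + (1 - I0) * Real.exp (-u))

/-- Emblematic disutility `E(x̄) = 1 - (1 - x̄/m)(1 - I(t_f - x̄))/(1 - I0)`. -/
noncomputable def Embl (m tf I0 xb : ℝ) : ℝ :=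
  1 - (1 - xb / m) * (1 - Ifun I0 (tf - xb)) / (1 - I0)

/-- At an interior Nash equilibrium `x*`, the emblematic disutility has the closed form
`E(x*) = (1 + x* - m I0) / (m (1 - I0))`. -/
theorem stmt7 (m tf I0 xstar : ℝ) (hm : 0 < m) (htf : 0 < tf)
    (hI0 : I0 ∈ Set.Ioo (0:ℝ) 1) (hx : xstar ∈ Set.Ioo 0 tf)
    (heq : Ifun I0 (tf - xstar) * (m - xstar) = 1) :
    Embl m tf I0 xstar = (1 + xstar - m * I0) / (m * (1 - I0)) := by
  obtain ⟨hI0p, hI01⟩ := hI0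
  set e := Real.exp (-(tf - xstar)) with he
  have hep : 0 < e := Real.exp_pos _
  have hDp : 0 < I0 + (1 - I0) * e := by nlinarith
  have hD : I0 + (1 - I0) * e ≠ 0 := ne_of_gt hDp
  have hI : Ifun I0 (tf - xstar) = I0 / (I0 + (1 - I0) * e) := by rw [Ifun]
  rw [hI] at heq
  have hD' : I0 * (m - xstar) = I0 + (1 - I0) * e := by
    field_simp at heq; linarith
  have h1I0 : (1 - I0) ≠ 0 := by linarith
  rw [Embl, hI]
  field_simp
  linear_combination hD'
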